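/- arXiv:2004.05736 — 5 statements merged into one kernel-verified Lean document; each statement's English description precedes it below -/
import Mathlib

section
/- Let K₁ and K₂ be convex subsets of real vector spaces and let f : K₁ → K₂ be a surjective affine map (i.e., f(t·a + (1−t)·a') = t·f(a) + (1−t)·f(a') for all a, a' ∈ K₁ and t ∈ [0,1]). Suppose there exists a point b₀ ∈ K₂ such that: (i) for every b₁ ∈ K₂ there exist b₂ ∈ K₂ and t ∈ (0,1) with b₀ = t·b₁ + (1−t)·b₂ (i.e., b₀ is an internal point of K₂), and (ii) the preimage f⁻¹({b₀}) is a singleton. Then f is injective on K₁. -/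
/-- Let `K₁` and `K₂` be convex subsets of real vector spaces and `f` a surjective
affine map from `K₁` onto `K₂`. If there is an internal point `b₀` of `K₂` whose
preimage is a singleton, then `f` is injective on `K₁`. -/
theorem affine_injOn_of_singleton_fiber
    {V W : Type*} [AddCommGroup V] [Module ℝ V] [AddCommGroup W] [Module ℝ W]
    (K₁ : Set V) (K₂ : Set W) (hK₁ : Convex ℝ K₁) (hK₂ : Convex ℝ K₂)
    (f : V → W)
    (hmaps : ∀ a ∈ K₁, f a ∈ K₂)
    (hsurj : ∀ b ∈ K₂, ∃ a ∈ K₁, f a = b)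
    (haff : ∀ a ∈ K₁, ∀ a' ∈ K₁, ∀ t : ℝ, 0 ≤ t → t ≤ 1 →
      f (t • a + (1 - t) • a') = t • f a + (1 - t) • f a')
    (b₀ : W) (hb₀ : b₀ ∈ K₂)
    (hinternal : ∀ b₁ ∈ K₂, ∃ b₂ ∈ K₂, ∃ t : ℝ, 0 < t ∧ t < 1 ∧
      b₀ = t • b₁ + (1 - t) • b₂)
    (hsingleton : ∀ a ∈ K₁, ∀ a' ∈ K₁, f a = b₀ → f a' = b₀ → a = a') :
    Set.InjOn f K₁ := by
  intro a ha a' ha' hfa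
  obtain ⟨b₂, hb₂, t, ht0, ht1, hb⟩ := hinternal (f a) (hmaps a ha)
  obtain ⟨a₂, ha₂, hfa₂⟩ := hsurj b₂ hb₂
  have h1 : f (t • a + (1 - t) • a₂) = b₀ := by
    rw [haff a ha a₂ ha₂ t ht0.le ht1.le, hfa₂, hb]
  have h2 : f (t • a' + (1 - t) • a₂) = b₀ := by
    rw [haff a' ha' a₂ ha₂ t ht0.le ht1.le, hfa₂, ← hfa, hb]
  have hk1 : t • a + (1 - t) • a₂ ∈ K₁ := hK₁ ha ha₂ ht0.le (by linarith) (by ring)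
  have hk2 : t • a' + (1 - t) • a₂ ∈ K₁ := hK₁ ha' ha₂ ht0.le (by linarith) (by ring)
  have := hsingleton _ hk1 _ hk2 h1 h2
  have hta : t • a = t • a' := by
    have h := congrArg (· - (1 - t) • a₂) this
    simpa using h
  exact smul_right_injective V ht0.ne' hta
end

section
/- Let σ ≥ 2 be an integer and define the sequence p : ℕ → ℤ by p₀ = 0, p₁ = 1, and p_{n+1} = σ·p_n − p_{n−1} for n ≥ 1. Then the pairs (a, b) of nonnegative integers satisfying a² + b² − σ·a·b = 1 are exactly the pairs (p_n, p_{n+1}) and (p_{n+1}, p_n) for n = 0, 1, 2, …. -/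
/-- For an integer `σ ≥ 2`, the nonnegative integer solutions `(a, b)` of
`a² + b² − σab = 1` are exactly the pairs `(pₙ, p_{n+1})` and `(p_{n+1}, pₙ)`
of consecutive terms of the sequence `p₀ = 0`, `p₁ = 1`, `p_{n+1} = σ pₙ − p_{n−1}`. -/
theorem pell_equation_solutions (σ : ℤ) (hσ : 2 ≤ σ) (p : ℕ → ℤ)
    (h0 : p 0 = 0) (h1 : p 1 = 1)
    (hrec : ∀ n : ℕ, 1 ≤ n → p (n + 1) = σ * p n - p (n - 1)) :
    ∀ a b : ℤ, 0 ≤ a → 0 ≤ b →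
      (a ^ 2 + b ^ 2 - σ * a * b = 1 ↔
        ∃ n : ℕ, (a = p n ∧ b = p (n + 1)) ∨ (a = p (n + 1) ∧ b = p n)) := by
  have key : ∀ n : ℕ, p n ^ 2 + p (n + 1) ^ 2 - σ * p n * p (n + 1) = 1 := by
    intro n
    induction n with
    | zero => simp [h0, h1]
    | succ k ih =>
      have h := hrec (k + 1) (by omega)
      simp only [Nat.add_sub_cancel] at h
      rw [h]; nlinarith [ih]
  have main : ∀ k : ℕ, ∀ a b : ℤ, 0 ≤ a → a ≤ b → (a + b).toNat = k →
      a ^ 2 + b ^ 2 - σ * a * b = 1 →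
      ∃ n : ℕ, (a = p n ∧ b = p (n + 1)) ∨ (a = p (n + 1) ∧ b = p n) := by
    intro k
    induction k using Nat.strong_induction_on with
    | _ k ih =>
      intro a b ha hab hk heq
      have hb : 0 ≤ b := le_trans ha hab
      rcases eq_or_lt_of_le ha with ha0 | ha1
      · -- a = 0, so b = 1
        rw [← ha0] at heq
        have hb1 : b = 1 := by nlinarith
        exact ⟨0, Or.inl ⟨by rw [h0, ← ha0], by rw [h1, hb1]⟩⟩
      · -- 0 < a, Vieta jump
        set b' := σ * a - b with hb'def
        have hsol : b' ^ 2 + a ^ 2 - σ * b' * a = 1 := by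
          have : b' ^ 2 + a ^ 2 - σ * b' * a = a ^ 2 + b ^ 2 - σ * a * b := by
            rw [hb'def]; ring
          linarith
        have hbb' : b' * b = a ^ 2 - 1 := by nlinarith
        have hb'0 : 0 ≤ b' := by nlinarith
        have hb'a : b' < a := by nlinarith
        obtain ⟨n, hn⟩ := ih ((b' + a).toNat) (by omega) b' a hb'0 hb'a.le rfl hsol
        rcases hn with ⟨e1, e2⟩ | ⟨e1, e2⟩
        · -- b' = p n, a = p (n+1), so b = p (n+2)
          refine ⟨n + 1, Or.inl ⟨e2, ?_⟩⟩
          have h := hrec (n + 1) (by omega)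
          simp only [Nat.add_sub_cancel] at h
          rw [h, ← e1, ← e2]
          linarith
        · -- b' = p (n+1), a = p n; n ≥ 1 since a > 0
          have hn1 : 1 ≤ n := by
            rcases Nat.eq_zero_or_pos n with rfl | h
            · rw [h0] at e2; omega
            · exact h
          refine ⟨n - 1, Or.inr ⟨?_, ?_⟩⟩
          · rw [show n - 1 + 1 = n by omega]; exact e2
          · have h := hrec n hn1
            rw [← e1, ← e2] at h
            linarith
  intro a b ha hb
  constructor
  · intro heq
    rcases le_or_gt a b with hab | hab
    · exact main _ a b ha hab rfl heq
    · obtain ⟨n, hn⟩ := main _ b a hb hab.le rfl (by linarith [heq]; )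
      exact ⟨n, hn.symm.imp (fun h => ⟨h.2, h.1⟩) (fun h => ⟨h.2, h.1⟩)⟩
  · rintro ⟨n, ⟨rfl, rfl⟩ | ⟨rfl, rfl⟩⟩
    · exact key n
    · linarith [key n]
end

section
/- For an integer σ ≥ 1, define the sequence p : ℕ → ℤ by p₀ = 0, p₁ = 1, and p_{n+1} = σ·p_n − p_{n−1} for n ≥ 1. Then for every even n ≥ 0, the greatest common divisor of p_n and p_{n+2} equals σ. -/
lemma int_gcd_add_mul_right_right (a b c : ℤ) :
    Int.gcd a (b + a * c) = Int.gcd a b := by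
  apply Nat.dvd_antisymm
  · rw [← Int.natCast_dvd_natCast]
    refine Int.dvd_coe_gcd (Int.gcd_dvd_left _ _) ?_
    have h1 : (Int.gcd a (b + a * c) : ℤ) ∣ a := Int.gcd_dvd_left _ _
    have h2 : (Int.gcd a (b + a * c) : ℤ) ∣ b + a * c := Int.gcd_dvd_right _ _
    simpa using dvd_sub h2 (h1.mul_right c)
  · rw [← Int.natCast_dvd_natCast]
    refine Int.dvd_coe_gcd (Int.gcd_dvd_left _ _) ?_
    exact dvd_add (Int.gcd_dvd_right _ _) ((Int.gcd_dvd_left _ _).mul_right c)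


/-- For `σ ≥ 1` and even `n`, the greatest common divisor of `pₙ` and `p_{n+2}`
equals `σ`, where `p₀ = 0`, `p₁ = 1`, `p_{n+1} = σ pₙ − p_{n−1}`. -/
theorem pell_seq_gcd_even (σ : ℤ) (hσ : 1 ≤ σ) (p : ℕ → ℤ)
    (h0 : p 0 = 0) (h1 : p 1 = 1)
    (hrec : ∀ n : ℕ, 1 ≤ n → p (n + 1) = σ * p n - p (n - 1)) :
    ∀ n : ℕ, Even n → (Int.gcd (p n) (p (n + 2)) : ℤ) = σ := by
  -- consecutive terms are coprime
  have hcop : ∀ n : ℕ, Int.gcd (p n) (p (n + 1)) = 1 := by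
    intro n
    induction n with
    | zero => simp [h0, h1]
    | succ k ih =>
      have hr := hrec (k + 1) (by omega)
      simp only [Nat.add_sub_cancel] at hr
      have : σ * p (k + 1) - p k = -p k + p (k + 1) * σ := by ring
      rw [hr, this, int_gcd_add_mul_right_right]
      simpa [Int.gcd, Int.natAbs_neg, Nat.gcd_comm] using ih
  -- σ divides even-indexed terms
  have hdvd : ∀ k : ℕ, σ ∣ p (2 * k) := by
    intro k
    induction k with
    | zero => simp [h0]
    | succ m ih =>
      have hr := hrec (2 * m + 1) (by omega)
      simp only [Nat.add_sub_cancel] at hr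
      have h2 : 2 * (m + 1) = (2 * m + 1) + 1 := by ring
      rw [h2, hr]
      exact dvd_sub (Dvd.intro _ rfl) ih
  intro n hn
  obtain ⟨k, hk⟩ := hn
  have hk2 : n = 2 * k := by omega
  have hr := hrec (n + 1) (by omega)
  simp only [Nat.add_sub_cancel] at hr
  have hre : p (n + 1 + 1) = -p n + p (n + 1) * σ := by rw [hr]; ring
  have : Int.gcd (p n) (p (n + 2)) = Int.gcd (p n) (p (n + 1) * σ) := by
    show Int.gcd (p n) (p (n + 1 + 1)) = _
    rw [hre]
    rw [show -p n + p (n + 1) * σ = p (n + 1) * σ + p n * (-1) by ring,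
      int_gcd_add_mul_right_right]
  rw [this]
  have hdn : σ ∣ p n := hk2 ▸ hdvd k
  -- gcd (p n) (p (n+1) * σ) = gcd (p n) σ since p n coprime to p (n+1)
  have hgcd : Int.gcd (p n) (p (n + 1) * σ) = Int.gcd (p n) σ := by
    have := Nat.Coprime.gcd_mul_left_cancel_right (n := σ.natAbs)
      (Nat.Coprime.symm (hcop n))
    simpa [Int.gcd, Int.natAbs_mul] using this
  rw [hgcd]
  have : Int.gcd (p n) σ = σ.natAbs := Nat.gcd_eq_right (by
    simpa [Int.gcd] using Int.natAbs_dvd_natAbs.mpr hdn)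
  rw [this]
  simp [Int.natAbs_of_nonneg (by omega : (0:ℤ) ≤ σ)]
end

section
/- There are no integers k₁ ≥ 2, k₂ ≥ 2, and m ≥ 1 with k₁² + k₂² = m²·k₁²·k₂² + 1. -/
/-- There are no integers `k₁ ≥ 2`, `k₂ ≥ 2`, `m ≥ 1` with
`k₁² + k₂² = m² k₁² k₂² + 1`. -/
theorem no_solutions_k1_k2_m :
    ¬ ∃ (k₁ k₂ m : ℤ), 2 ≤ k₁ ∧ 2 ≤ k₂ ∧ 1 ≤ m ∧
      k₁ ^ 2 + k₂ ^ 2 = m ^ 2 * k₁ ^ 2 * k₂ ^ 2 + 1 := by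
  rintro ⟨k₁, k₂, m, h1, h2, h3, h⟩
  have hk1 : 4 ≤ k₁ ^ 2 := by nlinarith
  have hk2 : 4 ≤ k₂ ^ 2 := by nlinarith
  have hm : 1 ≤ m ^ 2 := by nlinarith
  nlinarith [mul_le_mul hk1 hk2 (by norm_num) (by linarith),
    mul_le_mul hm (mul_le_mul hk1 hk2 (by norm_num) (by linarith)) (by norm_num) (by linarith),
    mul_nonneg (sub_nonneg.2 hk1) (sub_nonneg.2 hk2)]
end

section
/- Let k₁, k₂ ≥ 2 and m ≥ 1 be integers and let α₁, α₂, α₃ be positive integers satisfying α₁·α₂ = k₁² − 1, α₂·α₃ = k₂² − 1, and α₁·α₂ + α₂·α₃ + α₁·α₃ = m²·k₁²·k₂² − 1. Then m = 1, α₂ = 1, α₁ = k₁² − 1, and α₃ = k₂² − 1. -/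
/-- If `k₁, k₂ ≥ 2`, `m ≥ 1` are integers and `α₁, α₂, α₃` are positive integers with
`α₁α₂ = k₁² − 1`, `α₂α₃ = k₂² − 1`, and `α₁α₂ + α₂α₃ + α₁α₃ = m²k₁²k₂² − 1`, then
`m = 1`, `α₂ = 1`, `α₁ = k₁² − 1`, and `α₃ = k₂² − 1`. -/
theorem forced_values (k₁ k₂ m α₁ α₂ α₃ : ℤ)
    (hk₁ : 2 ≤ k₁) (hk₂ : 2 ≤ k₂) (hm : 1 ≤ m)
    (hα₁ : 0 < α₁) (hα₂ : 0 < α₂) (hα₃ : 0 < α₃)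
    (e₁ : α₁ * α₂ = k₁ ^ 2 - 1)
    (e₂ : α₂ * α₃ = k₂ ^ 2 - 1)
    (e₃ : α₁ * α₂ + α₂ * α₃ + α₁ * α₃ = m ^ 2 * k₁ ^ 2 * k₂ ^ 2 - 1) :
    m = 1 ∧ α₂ = 1 ∧ α₁ = k₁ ^ 2 - 1 ∧ α₃ = k₂ ^ 2 - 1 := by
  have h13 : α₁ * α₃ = m ^ 2 * k₁ ^ 2 * k₂ ^ 2 - k₁ ^ 2 - k₂ ^ 2 + 1 := by linarith
  have key : α₂ ^ 2 * (α₁ * α₃) = (k₁ ^ 2 - 1) * (k₂ ^ 2 - 1) := by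
    rw [← e₁, ← e₂]; ring
  have hX : 0 < α₁ * α₃ := mul_pos hα₁ hα₃
  have hm2 : 1 ≤ m ^ 2 := by nlinarith
  have hkk : 0 < k₁ ^ 2 * k₂ ^ 2 := by positivity
  have hα₂le : α₂ ≤ 1 := by
    by_contra h
    push_neg at h
    have h2 : 2 ≤ α₂ := h
    have hsq : 4 ≤ α₂ ^ 2 := by nlinarith
    have h4 : 4 * (α₁ * α₃) ≤ α₂ ^ 2 * (α₁ * α₃) :=
      mul_le_mul_of_nonneg_right hsq hX.le
    have hnn : 0 ≤ (m ^ 2 - 1) * (k₁ ^ 2 * k₂ ^ 2) :=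
      mul_nonneg (by linarith) hkk.le
    nlinarith
  have hα₂1 : α₂ = 1 := le_antisymm hα₂le hα₂
  subst hα₂1
  have hα₁v : α₁ = k₁ ^ 2 - 1 := by linarith
  have hα₃v : α₃ = k₂ ^ 2 - 1 := by linarith
  have hm1 : m = 1 := by nlinarith
  exact ⟨hm1, rfl, hα₁v, hα₃v⟩
end
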